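/- Let 0 < α < 1, n ∈ ℕ_+, and f = D_{2^{2n+1}} − D_{2^{2n}}. There is a constant c > 0 (depending only on α) such that for every integer s with 0 ≤ s ≤ n−1, setting q = 2^{2n} + 2^{2s}, one has for every x ∈ I_{2s} \ I_{2s+1}: |σ_q^α f(x)| ≥ c · 2^{2s(1+α)} / 2^{2αn}. -/

import Mathlib

open MeasureTheory Filter Finset
open scoped ENNReal NNReal

noncomputable section

/-- The dyadic group `G = ∏ Z₂`. -/
abbrev G : Type := ℕ → ZMod 2

instance : TopologicalSpace (ZMod 2) := ⊥
instance : DiscreteTopology (ZMod 2) := ⟨rfl⟩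
instance : MeasurableSpace (ZMod 2) := ⊤
instance : BorelSpace (ZMod 2) := ⟨borel_eq_top_of_discrete.symm⟩
instance : ContinuousAdd (ZMod 2) := ⟨continuous_of_discreteTopology⟩
instance : ContinuousNeg (ZMod 2) := ⟨continuous_of_discreteTopology⟩
instance : IsTopologicalAddGroup (ZMod 2) := ⟨⟩

/-- The normalized Haar measure `μ` on the dyadic group `G`. -/
def μG : Measure G := Measure.addHaarMeasure ⊤

/-- The Rademacher functions `r_k(x) = (-1)^{x_k}`. -/
def rad (k : ℕ) (x : G) : ℝ := (-1 : ℝ) ^ (x k).val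

/-- The Walsh functions `w_n = ∏_k r_k^{n_k}`, where `n = ∑ n_k 2^k`. -/
def walsh (n : ℕ) (x : G) : ℝ := ∏ k ∈ Finset.range n, rad k x ^ (Nat.testBit n k).toNat

/-- The Dirichlet kernels `D_n = ∑_{k=0}^{n-1} w_k`. -/
def dirichlet (n : ℕ) (x : G) : ℝ := ∑ k ∈ Finset.range n, walsh k x

/-- The Fejér kernels `K_n = (1/n) ∑_{k=1}^{n} D_k`. -/
def fejer (n : ℕ) (x : G) : ℝ := (n : ℝ)⁻¹ * ∑ k ∈ Finset.Icc 1 n, dirichlet k x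

/-- The Cesàro numbers `A_n^α = ((α+1)⋯(α+n))/n!`. -/
def cesA (α : ℝ) (n : ℕ) : ℝ := (∏ i ∈ Finset.range n, (α + i + 1)) / n.factorial

/-- The `(C,α)` kernels `K_n^α = (1/A_n^α) ∑_{k=1}^n A_{n-k}^{α-1} D_k`. -/
def cesKernel (α : ℝ) (n : ℕ) (x : G) : ℝ :=
  (cesA α n)⁻¹ * ∑ k ∈ Finset.Icc 1 n, cesA (α - 1) (n - k) * dirichlet k x

/-- Walsh–Fourier coefficients of an integrable function. -/
def walshCoeff (f : G → ℝ) (k : ℕ) : ℝ := ∫ x, f x * walsh k x ∂μG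

/-- Partial sums `S_m f` of the Walsh–Fourier series. -/
def partialSum (f : G → ℝ) (m : ℕ) (x : G) : ℝ :=
  ∑ k ∈ Finset.range m, walshCoeff f k * walsh k x

/-- The `(C,α)` means `σ_n^α f = (1/A_n^α) ∑_{k=1}^n A_{n-k}^{α-1} S_k f`. -/
def cesaroMean (α : ℝ) (f : G → ℝ) (n : ℕ) (x : G) : ℝ :=
  (cesA α n)⁻¹ * ∑ k ∈ Finset.Icc 1 n, cesA (α - 1) (n - k) * partialSum f k x

/-- The dyadic interval `I_n(x)`. -/
def dyadicI (n : ℕ) (x : G) : Set G := {y | ∀ i < n, y i = x i}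

/-- `e_k ∈ G`: the element whose `k`-th coordinate is `1` and all others `0`. -/
def eG (k : ℕ) : G := fun i => if i = k then 1 else 0

/-- The projection onto the first `n` coordinates. -/
def projG (n : ℕ) : G → (Fin n → ZMod 2) := fun x i => x i

/-- The dyadic filtration `ℱ_n`, generated by the dyadic intervals of length `n`. -/
def dyadicF : Filtration ℕ (inferInstance : MeasurableSpace G) where
  seq n := MeasurableSpace.comap (projG n) inferInstance
  mono' := by
    intro n m hnm
    have h : projG n = (fun (y : Fin m → ZMod 2) (i : Fin n) => y (Fin.castLE hnm i)) ∘ projG m :=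
      rfl
    simp only []
    rw [h, ← MeasurableSpace.comap_comp]
    exact MeasurableSpace.comap_mono
      ((measurable_pi_lambda _ fun i => measurable_pi_apply _).comap_le)
  le' := fun n => (measurable_pi_lambda _ fun i => measurable_pi_apply _).comap_le

/-- The Walsh–Fourier coefficients `F̂(k) = lim_n ∫ F_n w_k dμ` of a martingale. -/
def martCoeff (F : ℕ → G → ℝ) (k : ℕ) : ℝ :=
  limUnder atTop (fun n => ∫ x, F n x * walsh k x ∂μG)

/-- Partial sums `S_m F` of the Walsh–Fourier series of a martingale. -/
def martSum (F : ℕ → G → ℝ) (m : ℕ) (x : G) : ℝ :=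
  ∑ k ∈ Finset.range m, martCoeff F k * walsh k x

/-- The `(C,α)` means of a martingale. -/
def martCesaro (α : ℝ) (F : ℕ → G → ℝ) (n : ℕ) (x : G) : ℝ :=
  (cesA α n)⁻¹ * ∑ k ∈ Finset.Icc 1 n, cesA (α - 1) (n - k) * martSum F k x

/-- The `L_p(G)` quasi-norm `(∫ |f|^p dμ)^{1/p}`, valued in `ℝ≥0∞`. -/
def LpNormG (p : ℝ) (f : G → ℝ) : ℝ≥0∞ :=
  (∫⁻ x, ENNReal.ofReal |f x| ^ p ∂μG) ^ (1 / p)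

/-- The Hardy space quasi-norm `‖F‖_{H_p} = ‖sup_n |F_n|‖_p` of a martingale. -/
def hardyNorm (p : ℝ) (F : ℕ → G → ℝ) : ℝ≥0∞ :=
  (∫⁻ x, (⨆ n, ENNReal.ofReal |F n x|) ^ p ∂μG) ^ (1 / p)

/-- The Hardy quasi-norm of an integrable function, via its generated martingale `(E_n f)`. -/
def hardyFnNorm (p : ℝ) (f : G → ℝ) : ℝ≥0∞ :=
  hardyNorm p (fun n => μG[f | dyadicF n])



/-! ### Auxiliary lemmas -/

instance : μG.IsAddRightInvariant := by unfold μG; infer_instance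
instance : IsFiniteMeasure μG := by unfold μG; infer_instance

lemma muG_univ : μG Set.univ = 1 := by
  have := Measure.addHaarMeasure_self (K₀ := (⊤ : TopologicalSpace.PositiveCompacts G))
  simpa [μG] using this

lemma rad_sq (k : ℕ) (x : G) : rad k x * rad k x = 1 := by
  unfold rad; rw [← pow_add, ← two_mul, pow_mul]; norm_num

lemma abs_rad (k : ℕ) (x : G) : |rad k x| = 1 := by
  unfold rad
  rcases Nat.even_or_odd (x k).val with h | h
  · rw [h.neg_one_pow]; norm_num
  · rw [h.neg_one_pow]; norm_num

lemma walsh_eq_prod (n M : ℕ) (h : n ≤ M) (x : G) :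
    walsh n x = ∏ k ∈ Finset.range M, rad k x ^ (Nat.testBit n k).toNat := by
  unfold walsh
  rw [← Finset.prod_range_mul_prod_Ico _ h]
  have : ∀ k ∈ Finset.Ico n M, rad k x ^ (Nat.testBit n k).toNat = 1 := by
    intro k hk
    have : n.testBit k = false :=
      Nat.testBit_eq_false_of_lt (lt_of_lt_of_le (Nat.lt_two_pow_self)
        (Nat.pow_le_pow_right (by norm_num) (Finset.mem_Ico.mp hk).1))
    simp [this]
  rw [Finset.prod_eq_one this, mul_one]

lemma walsh_mul (a b : ℕ) (x : G) : walsh a x * walsh b x = walsh (a ^^^ b) x := by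
  set M := 2 ^ (a + b + 1) with hM
  have hM' : a + b + 1 ≤ M := Nat.le_of_lt (Nat.lt_two_pow_self)
  have ha : a ≤ M := by omega
  have hb : b ≤ M := by omega
  have hab : a ^^^ b ≤ M := by
    have h2 : a < 2 ^ (a + b + 1) := by omega
    have h3 : b < 2 ^ (a + b + 1) := by omega
    exact Nat.le_of_lt (Nat.xor_lt_two_pow h2 h3)
  rw [walsh_eq_prod a M ha, walsh_eq_prod b M hb, walsh_eq_prod (a ^^^ b) M hab,
    ← Finset.prod_mul_distrib]
  refine Finset.prod_congr rfl fun k _ => ?_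
  rw [Nat.testBit_xor]
  rcases Bool.eq_false_or_eq_true (a.testBit k) with h1 | h1 <;>
    rcases Bool.eq_false_or_eq_true (b.testBit k) with h2 | h2 <;>
      simp [h1, h2, rad_sq]

lemma walsh_zero' (x : G) : walsh 0 x = 1 := by simp [walsh]

lemma abs_walsh (n : ℕ) (x : G) : |walsh n x| = 1 := by
  unfold walsh
  rw [Finset.abs_prod]
  refine Finset.prod_eq_one fun k _ => ?_
  rw [abs_pow, abs_rad, one_pow]

lemma measurable_walsh (n : ℕ) : Measurable (walsh n) := by
  refine Finset.measurable_prod _ fun k _ => ?_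
  exact ((measurable_from_top (f := fun v : ZMod 2 => (-1 : ℝ) ^ v.val)).comp
    (measurable_pi_apply k)).pow_const _

lemma integrable_walsh (n : ℕ) : Integrable (walsh n) μG := by
  refine ⟨(measurable_walsh n).aestronglyMeasurable, ?_⟩
  refine (hasFiniteIntegral_const (1:ℝ)).mono' ?_
  filter_upwards with x
  rw [Real.norm_eq_abs, abs_walsh]

lemma rad_neg_step (a : ZMod 2) : ((-1:ℝ)) ^ (a + 1).val = -((-1:ℝ) ^ a.val) := by
  fin_cases a
  · show ((-1:ℝ)) ^ ((0:ZMod 2) + 1).val = -((-1:ℝ) ^ (0:ZMod 2).val)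
    norm_num [show ((2:ZMod 2)) = 0 from rfl, show ZMod.val (1:ZMod 2) = 1 from rfl,
      show ZMod.val (0:ZMod 2) = 0 from rfl, show ZMod.val (2:ZMod 2) = 0 from rfl]
  · show ((-1:ℝ)) ^ ((1:ZMod 2) + 1).val = -((-1:ℝ) ^ (1:ZMod 2).val)
    norm_num [show ((1:ZMod 2) + 1) = 0 from rfl, show ZMod.val (1:ZMod 2) = 1 from rfl,
      show ZMod.val (0:ZMod 2) = 0 from rfl, show ZMod.val (2:ZMod 2) = 0 from rfl]

lemma rad_add_eG_self (k : ℕ) (x : G) : rad k (x + eG k) = - rad k x := by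
  unfold rad eG
  have : (x + fun i => if i = k then (1 : ZMod 2) else 0) k = x k + 1 := by simp
  rw [this, rad_neg_step]

lemma rad_add_eG_ne (j k : ℕ) (h : j ≠ k) (x : G) : rad j (x + eG k) = rad j x := by
  unfold rad eG
  have : (x + fun i => if i = k then (1 : ZMod 2) else 0) j = x j := by simp [h]
  rw [this]

lemma walsh_add_eG (n k : ℕ) (hk : n.testBit k = true) (x : G) :
    walsh n (x + eG k) = - walsh n x := by
  have h2 : 2 ^ k ≤ n := by
    by_contra h
    rw [Nat.testBit_eq_false_of_lt (by omega)] at hk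
    simp at hk
  have hkn : k < n := lt_of_lt_of_le (Nat.lt_two_pow_self) h2
  have hmem : k ∈ Finset.range n := Finset.mem_range.mpr hkn
  unfold walsh
  rw [← Finset.mul_prod_erase _ _ hmem, ← Finset.mul_prod_erase _
    (fun j => rad j x ^ (n.testBit j).toNat) hmem]
  have h1 : rad k (x + eG k) ^ (n.testBit k).toNat = -(rad k x ^ (n.testBit k).toNat) := by
    rw [hk, rad_add_eG_self]; simp
  rw [h1, Finset.prod_congr rfl fun j hj =>
    (by rw [rad_add_eG_ne j k (Finset.ne_of_mem_erase hj) x] :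
      rad j (x + eG k) ^ (n.testBit j).toNat = rad j x ^ (n.testBit j).toNat)]
  ring

lemma integral_walsh (n : ℕ) : ∫ x, walsh n x ∂μG = if n = 0 then 1 else 0 := by
  rcases eq_or_ne n 0 with h | h
  · subst h
    simp only [walsh_zero', if_pos rfl]
    rw [integral_const, measureReal_def, muG_univ]
    simp
  · rw [if_neg h]
    obtain ⟨k, hk, -⟩ := Nat.exists_most_significant_bit h
    have h1 : ∫ x, walsh n x ∂μG = ∫ x, walsh n (x + eG k) ∂μG :=
      (integral_add_right_eq_self (walsh n) (eG k)).symm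
    have h2 : ∫ x, walsh n (x + eG k) ∂μG = - ∫ x, walsh n x ∂μG := by
      simp_rw [walsh_add_eG n k hk]
      exact integral_neg _
    linarith [h1, h2]

lemma integrable_walsh_mul (a b : ℕ) : Integrable (fun x => walsh a x * walsh b x) μG := by
  simp_rw [walsh_mul]
  exact integrable_walsh _

lemma integral_walsh_mul (a b : ℕ) :
    ∫ x, walsh a x * walsh b x ∂μG = if a = b then 1 else 0 := by
  simp_rw [walsh_mul, integral_walsh]
  simp [xor_eq_zero_iff]

/-! ### Cesàro number lemmas -/

lemma cesA_zero (α : ℝ) : cesA α 0 = 1 := by simp [cesA]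

lemma cesA_succ (α : ℝ) (n : ℕ) : cesA α (n + 1) = cesA α n * (α + n + 1) / (n + 1) := by
  unfold cesA
  rw [Finset.prod_range_succ, Nat.factorial_succ]
  push_cast
  rw [div_mul_eq_mul_div, div_div, mul_comm ((n:ℝ)+1)]

lemma cesA_pos {α : ℝ} (hα : -1 < α) (n : ℕ) : 0 < cesA α n := by
  unfold cesA
  apply div_pos
  · exact Finset.prod_pos fun i _ => by have : (0:ℝ) ≤ i := Nat.cast_nonneg i; linarith
  · exact_mod_cast Nat.factorial_pos n

lemma cesA_shift (α : ℝ) (n : ℕ) :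
    cesA (α - 1) (n + 1) = cesA α n * α / (n + 1) := by
  unfold cesA
  have hp : ∏ i ∈ Finset.range (n + 1), (α - 1 + i + 1)
      = α * ∏ i ∈ Finset.range n, (α + i + 1) := by
    rw [Finset.prod_range_succ']
    rw [Finset.prod_congr rfl (fun i _ => by push_cast; ring :
      ∀ i ∈ Finset.range n, (α - 1 + ((i:ℕ)+1:ℕ) + 1) = α + i + 1)]
    push_cast
    ring
  rw [hp, Nat.factorial_succ]
  push_cast
  rw [div_mul_eq_mul_div, div_div, mul_comm ((n:ℝ)+1), mul_comm α]

lemma cesA_rec (α : ℝ) (n : ℕ) :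
    cesA α (n + 1) = cesA α n + cesA (α - 1) (n + 1) := by
  rw [cesA_succ, cesA_shift]
  have h2 : ((n : ℝ) + 1) ≠ 0 := by positivity
  field_simp
  ring

lemma sum_cesA (β : ℝ) (N : ℕ) :
    ∑ j ∈ Finset.range (N + 1), cesA β j = cesA (β + 1) N := by
  induction N with
  | zero => simp [cesA_zero]
  | succ N ih =>
    rw [Finset.sum_range_succ, ih]
    have := cesA_rec (β + 1) N
    rw [show β + 1 - 1 = β by ring] at this
    linarith

lemma key_sum_aux (α : ℝ) (N : ℕ) :
    ∑ j ∈ Finset.range (N + 1), cesA (α - 1) j * ((N : ℝ) + 1 - j) = cesA (α + 1) N := by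
  induction N with
  | zero => simp [cesA_zero]
  | succ N ih =>
    have e1 : ∑ j ∈ Finset.range (N + 2), cesA (α - 1) j * (((N + 1 : ℕ) : ℝ) + 1 - j)
        = (∑ j ∈ Finset.range (N + 2), cesA (α - 1) j)
          + ∑ j ∈ Finset.range (N + 2), cesA (α - 1) j * ((N : ℝ) + 1 - j) := by
      rw [← Finset.sum_add_distrib]
      exact Finset.sum_congr rfl fun j _ => by push_cast; ring
    have e2 : ∑ j ∈ Finset.range (N + 2), cesA (α - 1) j * ((N : ℝ) + 1 - j)
        = ∑ j ∈ Finset.range (N + 1), cesA (α - 1) j * ((N : ℝ) + 1 - j) := by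
      rw [Finset.sum_range_succ]
      have hz : (N : ℝ) + 1 - ((N + 1 : ℕ) : ℝ) = 0 := by push_cast; ring
      rw [hz, mul_zero, add_zero]
    have e3 : ∑ j ∈ Finset.range (N + 2), cesA (α - 1) j = cesA α (N + 1) := by
      have := sum_cesA (α - 1) (N + 1)
      rw [show α - 1 + 1 = α by ring] at this
      exact this
    have e4 := cesA_rec (α + 1) N
    rw [show α + 1 - 1 = α by ring] at e4
    rw [show N + 1 + 1 = N + 2 from rfl, e1, e2, ih, e3]
    linarith

lemma key_sum (α : ℝ) (N : ℕ) (hN : 1 ≤ N) :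
    ∑ m ∈ Finset.Icc 1 N, cesA (α - 1) (N - m) * (m : ℝ) = cesA (α + 1) (N - 1) := by
  obtain ⟨M, rfl⟩ : ∃ M, N = M + 1 := ⟨N - 1, by omega⟩
  rw [show M + 1 - 1 = M from rfl, ← key_sum_aux α M]
  refine Finset.sum_nbij' (fun m => M + 1 - m) (fun j => M + 1 - j) ?_ ?_ ?_ ?_ ?_
  · intro m hm; simp only [Finset.mem_Icc] at hm; simp only [Finset.mem_range]; omega
  · intro j hj; simp only [Finset.mem_range] at hj; simp only [Finset.mem_Icc]; omega
  · intro m hm; simp only [Finset.mem_Icc] at hm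
    show M + 1 - (M + 1 - m) = m; omega
  · intro j hj; simp only [Finset.mem_range] at hj
    show M + 1 - (M + 1 - j) = j; omega
  · intro m hm
    simp only [Finset.mem_Icc] at hm
    have h1 : ((M + 1 - m : ℕ) : ℝ) = (M : ℝ) + 1 - m := by
      push_cast [Nat.cast_sub (by omega : m ≤ M + 1)]; ring
    show cesA (α - 1) (M + 1 - m) * (m : ℝ)
      = cesA (α - 1) (M + 1 - m) * ((M : ℝ) + 1 - ((M + 1 - m : ℕ) : ℝ))
    rw [h1]; ring

lemma ratio_step (α t : ℝ) (hα0 : 0 ≤ α) (ht : 1 ≤ t) :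
    1 + α / (t + 1) ≤ ((t + 1) / t) ^ α := by
  have ht0 : (0:ℝ) < t := by linarith
  have hr : (0:ℝ) < (t + 1) / t := by positivity
  have hx : (0:ℝ) < 1 + α / (t + 1) := by positivity
  have h1 : Real.log (1 + α / (t + 1)) ≤ α / (t + 1) := by
    have := Real.log_le_sub_one_of_pos hx
    linarith
  have h2 : 1 / (t + 1) ≤ Real.log ((t + 1) / t) := by
    have hlog := Real.one_sub_inv_le_log_of_pos hr
    have hinv : ((t + 1) / t)⁻¹ = t / (t + 1) := by rw [inv_div]
    rw [hinv] at hlog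
    have heq : 1 - t / (t + 1) = 1 / (t + 1) := by field_simp; ring
    linarith
  have h3 : α / (t + 1) ≤ α * Real.log ((t + 1) / t) := by
    have := mul_le_mul_of_nonneg_left h2 hα0
    rw [mul_one_div] at this
    exact this
  calc 1 + α / (t + 1) = Real.exp (Real.log (1 + α / (t + 1))) := (Real.exp_log hx).symm
    _ ≤ Real.exp (α * Real.log ((t + 1) / t)) := Real.exp_le_exp.mpr (le_trans h1 h3)
    _ = ((t + 1) / t) ^ α := by rw [Real.rpow_def_of_pos hr]; ring_nf

lemma cesA_ratio (α : ℝ) (hα0 : 0 ≤ α) (N : ℕ) (hN : 1 ≤ N) :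
    ∀ q : ℕ, N ≤ q → cesA α q * (N : ℝ) ^ α ≤ cesA α N * (q : ℝ) ^ α := by
  intro q hq
  induction q, hq using Nat.le_induction with
  | base => exact le_refl _
  | succ q hq ih =>
    have hq0 : (0:ℝ) < q := by exact_mod_cast lt_of_lt_of_le hN hq
    have hfac : (0:ℝ) < (α + q + 1) / (q + 1) := by positivity
    have step1 : cesA α (q + 1) * (N : ℝ) ^ α
        = cesA α q * (N : ℝ) ^ α * ((α + q + 1) / (q + 1)) := by
      rw [cesA_succ]; ring
    have step2 : cesA α q * (N : ℝ) ^ α * ((α + q + 1) / (q + 1))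
        ≤ cesA α N * (q : ℝ) ^ α * ((α + q + 1) / (q + 1)) :=
      mul_le_mul_of_nonneg_right ih (le_of_lt hfac)
    have key : (q : ℝ) ^ α * ((α + q + 1) / (q + 1)) ≤ ((q : ℝ) + 1) ^ α := by
      have e1 : (α + (q:ℝ) + 1) / (q + 1) = 1 + α / ((q:ℝ) + 1) := by field_simp; ring
      have e2 : ((q:ℝ) + 1) ^ α = (q:ℝ) ^ α * (((q:ℝ) + 1) / q) ^ α := by
        rw [← Real.mul_rpow (le_of_lt hq0) (by positivity)]
        rw [mul_div_cancel₀ _ (ne_of_gt hq0)]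
      rw [e1, e2]
      exact mul_le_mul_of_nonneg_left (ratio_step α q hα0 (by exact_mod_cast hN.trans hq))
        (Real.rpow_nonneg (le_of_lt hq0) α)
    have hcesN : 0 < cesA α N := cesA_pos (by linarith) N
    calc cesA α (q + 1) * (N : ℝ) ^ α
        ≤ cesA α N * (q : ℝ) ^ α * ((α + q + 1) / (q + 1)) := by rw [step1]; exact step2
      _ = cesA α N * ((q : ℝ) ^ α * ((α + q + 1) / (q + 1))) := by ring
      _ ≤ cesA α N * ((q : ℝ) + 1) ^ α := mul_le_mul_of_nonneg_left key (le_of_lt hcesN)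
      _ = cesA α N * ((q + 1 : ℕ) : ℝ) ^ α := by push_cast; ring_nf

/-! ### Fourier coefficients and partial sums of the Dirichlet difference -/

lemma walshCoeff_dd (a b j : ℕ) (hab : a ≤ b) :
    walshCoeff (fun y => dirichlet b y - dirichlet a y) j
      = if a ≤ j ∧ j < b then 1 else 0 := by
  unfold walshCoeff dirichlet
  have hfy : ∀ y : G, (∑ k ∈ range b, walsh k y - ∑ k ∈ range a, walsh k y) * walsh j y
      = ∑ k ∈ Finset.Ico a b, walsh k y * walsh j y := by
    intro y
    rw [← Finset.sum_Ico_eq_sub _ hab, Finset.sum_mul]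
  simp_rw [hfy]
  rw [integral_finset_sum _ (fun k _ => integrable_walsh_mul k j)]
  rw [Finset.sum_congr rfl (fun k _ => integral_walsh_mul k j)]
  rw [Finset.sum_ite_eq' (Finset.Ico a b) j (fun _ => (1:ℝ))]
  simp [Finset.mem_Ico]

lemma partialSum_dd (a b m : ℕ) (hab : a ≤ b) (hmb : m ≤ b) (x : G) :
    partialSum (fun y => dirichlet b y - dirichlet a y) m x
      = ∑ j ∈ Finset.Ico a m, walsh j x := by
  unfold partialSum
  rw [Finset.sum_congr rfl fun j _ => by rw [walshCoeff_dd a b j hab]]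
  rw [show (∑ j ∈ Finset.range m, (if a ≤ j ∧ j < b then (1:ℝ) else 0) * walsh j x)
      = ∑ j ∈ Finset.range m, (if a ≤ j ∧ j < b then walsh j x else 0) from
    Finset.sum_congr rfl fun j _ => by split_ifs <;> simp]
  rw [← Finset.sum_filter]
  congr 1
  ext j
  simp only [Finset.mem_filter, Finset.mem_range, Finset.mem_Ico]
  omega

/-! ### Walsh functions on dyadic blocks -/

lemma two_pow_add_eq_xor (t m : ℕ) (hm : m < 2 ^ t) : 2 ^ t + m = 2 ^ t ^^^ m := by
  apply Nat.eq_of_testBit_eq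
  intro k
  rcases lt_trichotomy k t with h | h | h
  · rw [Nat.testBit_two_pow_add_gt h, Nat.testBit_xor,
      Nat.testBit_two_pow_of_ne (by omega), Bool.false_xor]
  · subst h
    rw [Nat.testBit_two_pow_add_eq, Nat.testBit_xor, Nat.testBit_two_pow_self,
      Bool.true_xor]
  · have h1 : 2 ^ t + m < 2 ^ k := by
      have h2 : 2 ^ t + m < 2 ^ (t + 1) := by
        have := Nat.pow_succ 2 t
        omega
      exact lt_of_lt_of_le h2 (Nat.pow_le_pow_right (by norm_num) (by omega))
    have h3 : m < 2 ^ k := by omega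
    rw [Nat.testBit_lt_two_pow h1, Nat.testBit_xor,
      Nat.testBit_two_pow_of_ne (by omega), Nat.testBit_lt_two_pow h3]
    rfl

lemma walsh_two_pow (t : ℕ) (x : G) : walsh (2 ^ t) x = rad t x := by
  unfold walsh
  rw [Finset.prod_eq_single t]
  · rw [Nat.testBit_two_pow_self]
    simp
  · intro k _ hk
    rw [Nat.testBit_two_pow_of_ne (Ne.symm hk)]
    simp
  · intro h
    exact absurd (Finset.mem_range.mpr (Nat.lt_two_pow_self)) h

lemma walsh_eq_one_of_low (m T : ℕ) (x : G) (hm : m < 2 ^ T)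
    (hx : ∀ i < T, x i = 0) : walsh m x = 1 := by
  unfold walsh
  refine Finset.prod_eq_one fun k _ => ?_
  rcases Bool.eq_false_or_eq_true (m.testBit k) with h | h
  swap
  · simp [h]
  · have h2 : 2 ^ k ≤ m := by
      by_contra hcon
      rw [Nat.testBit_eq_false_of_lt (by omega)] at h
      simp at h
    have hk2 : k < T := by
      by_contra hcon
      push_neg at hcon
      have : 2 ^ T ≤ m := le_trans (Nat.pow_le_pow_right (by norm_num) hcon) h2
      omega
    have hr : rad k x = 1 := by
      unfold rad
      rw [hx k hk2]
      norm_num [show ZMod.val (0:ZMod 2) = 0 from rfl]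
    simp [hr]

/-- lower bound `|σ_q^α f(x)| ≥ c 2^{2s(1+α)} / 2^{2αn}` on `I_{2s} \ I_{2s+1}`,
with `f = D_{2^{2n+1}} - D_{2^{2n}}` and `q = 2^{2n} + 2^{2s}`. -/
theorem statement16 (α : ℝ) (hα0 : 0 < α) (hα1 : α < 1) :
    ∃ c : ℝ, 0 < c ∧ ∀ n : ℕ, 1 ≤ n → ∀ s : ℕ, s ≤ n - 1 →
      ∀ x ∈ dyadicI (2 * s) 0 \ dyadicI (2 * s + 1) 0,
        c * (2 : ℝ) ^ ((2 * (s : ℝ)) * (1 + α)) / (2 : ℝ) ^ (2 * α * (n : ℝ)) ≤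
          |cesaroMean α (fun y => dirichlet (2 ^ (2 * n + 1)) y - dirichlet (2 ^ (2 * n)) y)
            (2 ^ (2 * n) + 2 ^ (2 * s)) x| := by
  have hα1' : (0:ℝ) < α + 1 := by linarith
  refine ⟨1 / ((α + 1) * (2:ℝ) ^ α), by positivity, ?_⟩
  intro n hn s hs x hx
  obtain ⟨hxI, -⟩ := hx
  have hx0 : ∀ i < 2 * s, x i = 0 := by
    intro i hi
    have := hxI i hi
    simpa using this
  set a := 2 ^ (2 * n) with ha
  set N := 2 ^ (2 * s) with hNdef
  set b := 2 ^ (2 * n + 1) with hb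
  set f : G → ℝ := fun y => dirichlet b y - dirichlet a y with hf
  have hsn : s < n := by omega
  have hN1 : 1 ≤ N := Nat.one_le_two_pow
  have hNa : N ≤ a := Nat.pow_le_pow_right (by norm_num) (by omega)
  have hab : a ≤ b := Nat.pow_le_pow_right (by norm_num) (by omega)
  have hba : b = 2 * a := by rw [ha, hb, pow_succ]; ring
  have hqb : a + N ≤ b := by omega
  have ha1 : 1 ≤ a := Nat.one_le_two_pow
  -- Walsh functions on the block are constant
  have hwalsh : ∀ m < N, walsh (a + m) x = rad (2 * n) x := by
    intro m hm
    rw [ha, two_pow_add_eq_xor (2 * n) m (by omega), ← walsh_mul,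
      walsh_eq_one_of_low m (2 * s) x hm hx0, mul_one, walsh_two_pow]
  -- partial sums at x
  have hps : ∀ k ∈ Finset.Ioc a (a + N),
      partialSum f k x = ((k - a : ℕ) : ℝ) * rad (2 * n) x := by
    intro k hk
    rw [Finset.mem_Ioc] at hk
    rw [hf, partialSum_dd a b k hab (by omega) x]
    have hcongr : ∀ j ∈ Finset.Ico a k, walsh j x = rad (2 * n) x := by
      intro j hj
      rw [Finset.mem_Ico] at hj
      have hj' : j = a + (j - a) := by omega
      rw [hj']
      exact hwalsh (j - a) (by omega)
    rw [Finset.sum_congr rfl hcongr, Finset.sum_const, Nat.card_Ico, nsmul_eq_mul]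
  have hps0 : ∀ k ∈ Finset.Ioc 0 a, partialSum f k x = 0 := by
    intro k hk
    rw [Finset.mem_Ioc] at hk
    rw [hf, partialSum_dd a b k hab (by omega) x]
    rw [Finset.Ico_eq_empty (by omega), Finset.sum_empty]
  -- the sum defining the Cesàro mean
  have hIcc : Finset.Icc 1 (a + N) = Finset.Ioc 0 (a + N) := by
    ext k
    simp only [Finset.mem_Icc, Finset.mem_Ioc]
    omega
  have hsum : ∑ k ∈ Finset.Icc 1 (a + N), cesA (α - 1) (a + N - k) * partialSum f k x
      = cesA (α + 1) (N - 1) * rad (2 * n) x := by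
    rw [hIcc, ← Finset.sum_Ioc_consecutive _ (Nat.zero_le a) (Nat.le_add_right a N)]
    rw [Finset.sum_congr rfl (fun k hk => by rw [hps0 k hk, mul_zero]), Finset.sum_const_zero,
      zero_add]
    rw [Finset.sum_congr rfl (fun k hk => by rw [hps k hk])]
    have hbij : ∑ k ∈ Finset.Ioc a (a + N),
        cesA (α - 1) (a + N - k) * (((k - a : ℕ) : ℝ) * rad (2 * n) x)
        = ∑ m ∈ Finset.Icc 1 N, cesA (α - 1) (N - m) * (m : ℝ) * rad (2 * n) x := by
      refine Finset.sum_nbij' (fun k => k - a) (fun m => a + m) ?_ ?_ ?_ ?_ ?_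
      · intro k hk; rw [Finset.mem_Ioc] at hk
        show (fun k => k - a) k ∈ Finset.Icc 1 N
        rw [Finset.mem_Icc]
        show 1 ≤ k - a ∧ k - a ≤ N
        omega
      · intro m hm; rw [Finset.mem_Icc] at hm
        show (fun m => a + m) m ∈ Finset.Ioc a (a + N)
        rw [Finset.mem_Ioc]
        show a < a + m ∧ a + m ≤ a + N
        omega
      · intro k hk; rw [Finset.mem_Ioc] at hk; show a + (k - a) = k; omega
      · intro m hm; rw [Finset.mem_Icc] at hm; show a + m - a = m; omega
      · intro k hk
        rw [Finset.mem_Ioc] at hk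
        show cesA (α - 1) (a + N - k) * (((k - a : ℕ) : ℝ) * rad (2 * n) x)
          = cesA (α - 1) (N - (k - a)) * (((k - a : ℕ) : ℝ)) * rad (2 * n) x
        rw [show N - (k - a) = a + N - k by omega]
        ring
    rw [hbij, ← Finset.sum_mul, key_sum α N hN1]
  have hval : cesaroMean α f (a + N) x
      = (cesA α (a + N))⁻¹ * (cesA (α + 1) (N - 1) * rad (2 * n) x) := by
    unfold cesaroMean
    rw [hsum]
  -- absolute value
  have hq0 : (0:ℝ) < cesA α (a + N) := cesA_pos (by linarith) _
  have hS0 : (0:ℝ) < cesA (α + 1) (N - 1) := cesA_pos (by linarith) _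
  have habs : |cesaroMean α f (a + N) x|
      = cesA (α + 1) (N - 1) / cesA α (a + N) := by
    rw [hval, abs_mul, abs_mul, abs_rad, mul_one, abs_inv,
      abs_of_pos hq0, abs_of_pos hS0]
    rw [inv_mul_eq_div]
  rw [hf] at habs
  rw [habs]
  -- positivity facts
  have hN0 : (0:ℝ) < cesA α N := cesA_pos (by linarith) N
  have hNr : (0:ℝ) < (N:ℝ) := by exact_mod_cast hN1
  have hqr : (0:ℝ) < ((a + N : ℕ):ℝ) := by positivity
  have har : (0:ℝ) < (a:ℝ) := by exact_mod_cast ha1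
  have h2α : (0:ℝ) < (2:ℝ) ^ α := Real.rpow_pos_of_pos (by norm_num) α
  have haα : (0:ℝ) < (a:ℝ) ^ α := Real.rpow_pos_of_pos har α
  -- identify the powers of two
  have fA : (2:ℝ) ^ ((2 * (s:ℝ)) * (1 + α)) = (N:ℝ) ^ (1 + α) := by
    rw [show (2 * (s:ℝ)) * (1 + α) = ((2 * s : ℕ):ℝ) * (1 + α) by push_cast; ring]
    rw [Real.rpow_mul (by norm_num) ((2 * s : ℕ):ℝ) (1 + α), Real.rpow_natCast]
    rw [hNdef]
    push_cast
    ring_nf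
  have fB : (2:ℝ) ^ (2 * α * (n:ℝ)) = (a:ℝ) ^ α := by
    rw [show 2 * α * (n:ℝ) = ((2 * n : ℕ):ℝ) * α by push_cast; ring]
    rw [Real.rpow_mul (by norm_num) ((2 * n : ℕ):ℝ) α, Real.rpow_natCast]
    rw [ha]
    push_cast
    ring_nf
  rw [fA, fB]
  -- value of cesA (α+1) (N-1)
  have hS : cesA (α + 1) (N - 1) = (N:ℝ) * cesA α N / (α + 1) := by
    have h := cesA_shift (α + 1) (N - 1)
    rw [show α + 1 - 1 = α by ring, show N - 1 + 1 = N by omega] at h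
    have hc : ((N - 1 : ℕ):ℝ) + 1 = (N:ℝ) := by
      push_cast [Nat.cast_sub hN1]
      ring
    rw [hc] at h
    rw [h]
    field_simp
  -- ratio bound
  have hratio := cesA_ratio α (le_of_lt hα0) N hN1 (a + N) (by omega)
  have hq2 : ((a + N : ℕ):ℝ) ≤ 2 * (a:ℝ) := by
    push_cast
    have : (N:ℝ) ≤ (a:ℝ) := by exact_mod_cast hNa
    linarith
  have hqpow : ((a + N : ℕ):ℝ) ^ α ≤ (2:ℝ) ^ α * (a:ℝ) ^ α := by
    calc ((a + N : ℕ):ℝ) ^ α ≤ (2 * (a:ℝ)) ^ α :=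
          Real.rpow_le_rpow (le_of_lt hqr) hq2 (le_of_lt hα0)
      _ = (2:ℝ) ^ α * (a:ℝ) ^ α := Real.mul_rpow (by norm_num) (le_of_lt har)
  have main : (N:ℝ) ^ α * cesA α (a + N) ≤ cesA α N * ((2:ℝ) ^ α * (a:ℝ) ^ α) := by
    calc (N:ℝ) ^ α * cesA α (a + N) = cesA α (a + N) * (N:ℝ) ^ α := by ring
      _ ≤ cesA α N * ((a + N : ℕ):ℝ) ^ α := hratio
      _ ≤ cesA α N * ((2:ℝ) ^ α * (a:ℝ) ^ α) :=
          mul_le_mul_of_nonneg_left hqpow (le_of_lt hN0)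
  -- final manipulation
  rw [hS]
  rw [div_le_div_iff₀ haα hq0]
  have elhs : 1 / ((α + 1) * (2:ℝ) ^ α) * (N:ℝ) ^ (1 + α) * cesA α (a + N)
      = (N:ℝ) * ((N:ℝ) ^ α * cesA α (a + N)) / ((α + 1) * (2:ℝ) ^ α) := by
    rw [Real.rpow_add hNr 1 α, Real.rpow_one]
    ring
  have erhs : (N:ℝ) * cesA α N / (α + 1) * (a:ℝ) ^ α
      = (N:ℝ) * (cesA α N * ((2:ℝ) ^ α * (a:ℝ) ^ α)) / ((α + 1) * (2:ℝ) ^ α) := by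
    field_simp
  rw [elhs, erhs]
  gcongr


end
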